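/- (Induction step of the main theorem) Suppose E[d_1(\hat{F}_{j-1,m}, F_{j-1})] \leq \delta and E[d_1(G_m, F_j)] \leq \epsilon where G_m is the empirical distribution of m i.i.d. copies of R^{(j)}. Then the bootstrap pool at level j satisfies E[d_1(\hat{F}_{j,m}, F_j)] \leq \rho_1 \delta + \epsilon, where \rho_1 = E[\sum_{r=1}^N |C_r|]. -/

import Mathlib

open MeasureTheory ProbabilityTheory Filter Topology
open scoped ENNReal

noncomputable def cdfFun (μ : Measure ℝ) (x : ℝ) : ℝ := (μ (Set.Iic x)).toReal

noncomputable def pseudoInv (F : ℝ → ℝ) (t : ℝ) : ℝ := sInf {x | t ≤ F x}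

noncomputable def empCDF {Ω : Type*} (m : ℕ) (R : ℕ → Ω → ℝ) (ω : Ω) (x : ℝ) : ℝ :=
  (1 / m : ℝ) * ∑ i ∈ Finset.range m, (if R i ω ≤ x then (1 : ℝ) else 0)

/-- Index type for the branching vectors `B i` and uniforms `U i r` of one level. -/
def lvlIdx : Type := ℕ ⊕ (ℕ × ℕ)

def lvlType : lvlIdx → Type := Sum.elim (fun _ => ℝ × ℕ × (ℕ → ℝ)) (fun _ => ℝ)

noncomputable instance (s : lvlIdx) : MeasurableSpace (lvlType s) := by
  cases s with
  | inl a => exact (inferInstance : MeasurableSpace (ℝ × ℕ × (ℕ → ℝ)))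
  | inr a => exact (inferInstance : MeasurableSpace ℝ)

def lvlFam {Ω : Type*} (B : ℕ → Ω → ℝ × ℕ × (ℕ → ℝ)) (U : ℕ → ℕ → Ω → ℝ)
    (s : lvlIdx) : Ω → lvlType s :=
  Sum.rec (motive := fun s => Ω → lvlType s)
    (fun i ω => B i ω) (fun ir ω => U ir.1 ir.2 ω) s

section Helpers

lemma cdfFun_eq_cdf (μ : Measure ℝ) [IsProbabilityMeasure μ] : cdfFun μ = cdf μ := by
  ext x; rw [cdfFun, cdf_eq_real, measureReal_def]

lemma cdfFun_mono (μ : Measure ℝ) [IsProbabilityMeasure μ] : Monotone (cdfFun μ) := by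
  rw [cdfFun_eq_cdf]; exact (cdf μ).mono

lemma cdfFun_meas (μ : Measure ℝ) [IsProbabilityMeasure μ] : Measurable (cdfFun μ) :=
  (cdfFun_mono μ).measurable

lemma cdfFun_nonneg (μ : Measure ℝ) (x : ℝ) : 0 ≤ cdfFun μ x := ENNReal.toReal_nonneg

lemma cdfFun_le_one (μ : Measure ℝ) [IsProbabilityMeasure μ] (x : ℝ) : cdfFun μ x ≤ 1 := by
  rw [cdfFun]
  refine ENNReal.toReal_le_of_le_ofReal one_pos.le ?_
  simpa using prob_le_one (μ := μ) (s := Set.Iic x)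

/-- Galois connection for the pseudo inverse. -/
lemma pseudoInv_le_iff (μ : Measure ℝ) [IsProbabilityMeasure μ] {t : ℝ} (ht : t ∈ Set.Ioo (0:ℝ) 1)
    (x : ℝ) : pseudoInv (cdfFun μ) t ≤ x ↔ t ≤ cdfFun μ x := by
  set F := cdfFun μ with hF
  have hmono : Monotone F := cdfFun_mono μ
  set S := {y | t ≤ F y} with hS
  have hne : S.Nonempty := by
    have h1 : Tendsto F atTop (𝓝 1) := by rw [hF, cdfFun_eq_cdf]; exact tendsto_cdf_atTop μ
    have := (h1.eventually (eventually_gt_nhds ht.2)).exists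
    obtain ⟨y, hy⟩ := this
    exact ⟨y, hy.le⟩
  have hbdd : BddBelow S := by
    have h0 : Tendsto F atBot (𝓝 0) := by rw [hF, cdfFun_eq_cdf]; exact tendsto_cdf_atBot μ
    obtain ⟨y0, hy0⟩ := eventually_atBot.mp (h0.eventually (eventually_lt_nhds ht.1))
    refine ⟨y0, fun y hy => ?_⟩
    by_contra h
    exact absurd (le_trans hy (hmono (le_of_not_ge h))) (not_le.2 (hy0 y0 le_rfl))
  have hmem : sInf S ∈ S := by
    set a := sInf S with ha
    by_contra hcon
    have hFa : F a < t := lt_of_not_ge hcon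
    have hrc : ContinuousWithinAt (cdf μ) (Set.Ici a) a := (cdf μ).right_continuous a
    have : ∀ᶠ y in 𝓝[Set.Ici a] a, F y < t := by
      rw [hF, cdfFun_eq_cdf]
      exact hrc.eventually_lt continuousWithinAt_const (by rwa [hF, cdfFun_eq_cdf] at hFa)
    rw [eventually_nhdsWithin_iff, Metric.eventually_nhds_iff] at this
    obtain ⟨ε, hε, hball⟩ := this
    obtain ⟨s, hsS, hs⟩ := (csInf_lt_iff hbdd hne).mp (show a < a + ε by linarith)
    have hsa : a ≤ s := csInf_le hbdd hsS
    have : F s < t := hball (by rw [Real.dist_eq, abs_lt]; constructor <;> linarith) hsa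
    exact absurd hsS (by simpa [hS] using not_le.2 this)
  constructor
  · intro h
    exact le_trans hmem (hmono h)
  · intro h
    exact csInf_le hbdd h

noncomputable def pinvSur (k : Measure ℝ) (t : ℝ) : ℝ :=
  (⨅ q : ℚ, if t ≤ cdfFun k q then ((q : ℝ) : EReal) else ⊤).toReal

lemma cdfFun_meas_fst (q : ℝ) : Measurable (fun k : Measure ℝ => cdfFun k q) :=
  ENNReal.measurable_toReal.comp (Measure.measurable_coe measurableSet_Iic)

lemma pinvSur_meas : Measurable (fun p : Measure ℝ × ℝ => pinvSur p.1 p.2) := by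
  apply measurable_ereal_toReal.comp
  apply Measurable.iInf
  intro q
  have hset : MeasurableSet {p : Measure ℝ × ℝ | p.2 ≤ cdfFun p.1 q} :=
    measurableSet_le measurable_snd ((cdfFun_meas_fst q).comp measurable_fst)
  exact Measurable.ite hset measurable_const measurable_const

lemma pinvSur_eq (k : Measure ℝ) [IsProbabilityMeasure k] {t : ℝ} (ht : t ∈ Set.Ioo (0:ℝ) 1) :
    pinvSur k t = pseudoInv (cdfFun k) t := by
  set a := pseudoInv (cdfFun k) t with ha
  have hiInf : (⨅ q : ℚ, if t ≤ cdfFun k q then ((q : ℝ) : EReal) else ⊤) = (a : EReal) := by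
    apply le_antisymm
    · by_contra hcon
      obtain ⟨q, hq1, hq2⟩ := EReal.exists_rat_btwn_of_lt (lt_of_not_ge hcon)
      have haq : a ≤ (q : ℝ) := by exact_mod_cast hq1.le
      have hcd : t ≤ cdfFun k q := (pseudoInv_le_iff k ht _).mp haq
      have : (⨅ q : ℚ, if t ≤ cdfFun k q then ((q : ℝ) : EReal) else ⊤) ≤ ((q:ℝ) : EReal) := by
        refine iInf_le_of_le q ?_
        simp [hcd]
      exact absurd (lt_of_le_of_lt this hq2) (lt_irrefl _)
    · refine le_iInf fun q => ?_
      split_ifs with h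
      · exact_mod_cast (pseudoInv_le_iff k ht _).mpr h
      · exact le_top
  rw [pinvSur, hiInf, EReal.toReal_coe]

lemma lint_ind_diff (a b : ℝ) :
    ∫⁻ x, ENNReal.ofReal |(if a ≤ x then (1:ℝ) else 0) - (if b ≤ x then (1:ℝ) else 0)| =
      ENNReal.ofReal |a - b| := by
  wlog hab : a ≤ b with H
  · rw [abs_sub_comm, ← H b a (le_of_not_ge hab)]
    congr 1 with x
    rw [abs_sub_comm]
  have hpt : ∀ x, ENNReal.ofReal |(if a ≤ x then (1:ℝ) else 0) - (if b ≤ x then (1:ℝ) else 0)| =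
      (Set.Ico a b).indicator (fun _ => (1:ℝ≥0∞)) x := by
    intro x
    by_cases h2 : b ≤ x
    · have h1 : a ≤ x := le_trans hab h2
      simp [Set.indicator_apply, Set.mem_Ico, h1, h2, not_lt.mpr h2]
    · by_cases h1 : a ≤ x
      · simp [Set.indicator_apply, Set.mem_Ico, h1, h2, lt_of_not_ge h2]
      · simp [Set.indicator_apply, Set.mem_Ico, h1, h2]
  rw [lintegral_congr hpt, lintegral_indicator measurableSet_Ico]
  simp [Real.volume_Ico, abs_of_nonpos (by linarith : a - b ≤ 0)]

lemma lint_ind_diff' (u v : ℝ) :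
    ∫⁻ t, ENNReal.ofReal |(if t ≤ u then (1:ℝ) else 0) - (if t ≤ v then (1:ℝ) else 0)| =
      ENNReal.ofReal |u - v| := by
  wlog huv : v ≤ u with H
  · rw [abs_sub_comm, ← H v u (le_of_not_ge huv)]
    congr 1 with t
    rw [abs_sub_comm]
  have hpt : ∀ t, ENNReal.ofReal |(if t ≤ u then (1:ℝ) else 0) - (if t ≤ v then (1:ℝ) else 0)| =
      (Set.Ioc v u).indicator (fun _ => (1:ℝ≥0∞)) t := by
    intro t
    by_cases h2 : t ≤ v
    · have h1 : t ≤ u := le_trans h2 huv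
      simp [Set.indicator_apply, Set.mem_Ioc, h1, h2, not_lt.mpr h2]
    · by_cases h1 : t ≤ u
      · simp [Set.indicator_apply, Set.mem_Ioc, h1, h2, lt_of_not_ge h2]
      · simp [Set.indicator_apply, Set.mem_Ioc, h1, h2]
  rw [lintegral_congr hpt, lintegral_indicator measurableSet_Ioc]
  simp [Real.volume_Ioc, abs_of_nonneg (by linarith : 0 ≤ u - v)]

lemma quantile_le (k μp : Measure ℝ) [IsProbabilityMeasure k] [IsProbabilityMeasure μp] :
    ∫⁻ t in Set.Ioo (0:ℝ) 1, ENNReal.ofReal |pseudoInv (cdfFun k) t - pseudoInv (cdfFun μp) t| ≤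
      ∫⁻ x, ENNReal.ofReal |cdfFun k x - cdfFun μp x| := by
  have hstep1 : ∫⁻ t in Set.Ioo (0:ℝ) 1,
      ENNReal.ofReal |pseudoInv (cdfFun k) t - pseudoInv (cdfFun μp) t| =
      ∫⁻ t in Set.Ioo (0:ℝ) 1, ∫⁻ x,
        ENNReal.ofReal |(if t ≤ cdfFun k x then (1:ℝ) else 0) -
          (if t ≤ cdfFun μp x then (1:ℝ) else 0)| := by
    refine setLIntegral_congr_fun measurableSet_Ioo (fun t ht => ?_)
    rw [← lint_ind_diff]
    congr 1 with x
    rw [if_congr (pseudoInv_le_iff k ht x) rfl rfl, if_congr (pseudoInv_le_iff μp ht x) rfl rfl]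
  rw [hstep1]
  have hmeas : Measurable (fun p : ℝ × ℝ =>
      ENNReal.ofReal |(if p.1 ≤ cdfFun k p.2 then (1:ℝ) else 0) -
        (if p.1 ≤ cdfFun μp p.2 then (1:ℝ) else 0)|) := by
    have h1 : MeasurableSet {p : ℝ × ℝ | p.1 ≤ cdfFun k p.2} :=
      measurableSet_le measurable_fst ((cdfFun_meas k).comp measurable_snd)
    have h2 : MeasurableSet {p : ℝ × ℝ | p.1 ≤ cdfFun μp p.2} :=
      measurableSet_le measurable_fst ((cdfFun_meas μp).comp measurable_snd)
    exact ENNReal.measurable_ofReal.comp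
      ((((Measurable.ite h1 measurable_const measurable_const).sub
        (Measurable.ite h2 measurable_const measurable_const))).abs)
  rw [lintegral_lintegral_swap hmeas.aemeasurable]
  refine lintegral_mono fun x => ?_
  calc ∫⁻ t in Set.Ioo (0:ℝ) 1, ENNReal.ofReal |(if t ≤ cdfFun k x then (1:ℝ) else 0) -
        (if t ≤ cdfFun μp x then (1:ℝ) else 0)|
      ≤ ∫⁻ t, ENNReal.ofReal |(if t ≤ cdfFun k x then (1:ℝ) else 0) -
        (if t ≤ cdfFun μp x then (1:ℝ) else 0)| :=
        lintegral_mono' Measure.restrict_le_self le_rfl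
    _ = ENNReal.ofReal |cdfFun k x - cdfFun μp x| := lint_ind_diff' _ _

lemma Iic_ne_top (μ : Measure ℝ) [IsProbabilityMeasure μ] (x : ℝ) : μ (Set.Iic x) ≠ ⊤ :=
  (measure_lt_top μ _).ne

lemma ofReal_cdfFun (μ : Measure ℝ) [IsProbabilityMeasure μ] (x : ℝ) :
    ENNReal.ofReal (cdfFun μ x) = μ (Set.Iic x) := by
  rw [cdfFun, ENNReal.ofReal_toReal (Iic_ne_top μ x)]

lemma Ioi_eq (μ : Measure ℝ) [IsProbabilityMeasure μ] (x : ℝ) :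
    μ (Set.Ioi x) = 1 - μ (Set.Iic x) := by
  have := measure_compl (μ := μ) measurableSet_Iic (Iic_ne_top μ x)
  simpa [Set.compl_Iic] using this

lemma ofReal_one_sub_cdfFun (μ : Measure ℝ) [IsProbabilityMeasure μ] (x : ℝ) :
    ENNReal.ofReal (1 - cdfFun μ x) = μ (Set.Ioi x) := by
  rw [Ioi_eq, cdfFun]
  rw [show (1:ℝ) = (1:ℝ≥0∞).toReal by simp]
  rw [← ENNReal.toReal_sub_of_le (by simpa using prob_le_one (μ := μ) (s := Set.Iic x))
    ENNReal.one_ne_top]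
  exact ENNReal.ofReal_toReal (by simp [Iic_ne_top μ x, ENNReal.sub_ne_top])

lemma meas_cdf_enn (μ : Measure ℝ) : Measurable (fun x => μ (Set.Iic x)) :=
  Monotone.measurable (fun x y hxy => measure_mono (Set.Iic_subset_Iic.mpr hxy))

lemma meas_ioi_enn (μ : Measure ℝ) : Measurable (fun x => μ (Set.Ioi x)) :=
  Antitone.measurable (fun x y hxy => measure_mono (Set.Ioi_subset_Ioi hxy))

lemma Ltail1 (μ : Measure ℝ) [IsProbabilityMeasure μ] (a : ℝ) :
    ∫⁻ x in Set.Iio a, μ (Set.Iic x) ≤ ∫⁻ y, ENNReal.ofReal (|a| + |y|) ∂μ := by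
  have hrw : ∀ x, μ (Set.Iic x) = ∫⁻ y, (if y ≤ x then (1:ℝ≥0∞) else 0) ∂μ := by
    intro x
    rw [← lintegral_indicator_one measurableSet_Iic]
    exact lintegral_congr fun y => by simp [Set.indicator_apply, Set.mem_Iic]
  calc ∫⁻ x in Set.Iio a, μ (Set.Iic x)
      = ∫⁻ x in Set.Iio a, ∫⁻ y, (if y ≤ x then (1:ℝ≥0∞) else 0) ∂μ :=
        lintegral_congr fun x => hrw x
    _ = ∫⁻ y, (∫⁻ x in Set.Iio a, (if y ≤ x then (1:ℝ≥0∞) else 0)) ∂μ := by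
        refine lintegral_lintegral_swap ?_
        refine (Measurable.ite ?_ measurable_const measurable_const).aemeasurable
        exact measurableSet_le measurable_snd measurable_fst
    _ ≤ ∫⁻ y, ENNReal.ofReal (|a| + |y|) ∂μ := by
        refine lintegral_mono fun y => ?_
        have h1 : ∫⁻ x in Set.Iio a, (if y ≤ x then (1:ℝ≥0∞) else 0) =
            (volume.restrict (Set.Iio a)) (Set.Ici y) := by
          rw [← lintegral_indicator_one measurableSet_Ici]
          exact lintegral_congr fun x => by simp [Set.indicator_apply, Set.mem_Ici]
        rw [h1, Measure.restrict_apply measurableSet_Ici, Set.Ici_inter_Iio, Real.volume_Ico]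
        exact ENNReal.ofReal_le_ofReal (by cases abs_cases a <;> cases abs_cases y <;> linarith)

lemma Ltail2 (μ : Measure ℝ) [IsProbabilityMeasure μ] (a : ℝ) :
    ∫⁻ x in Set.Ici a, μ (Set.Ioi x) ≤ ∫⁻ y, ENNReal.ofReal (|a| + |y|) ∂μ := by
  have hrw : ∀ x, μ (Set.Ioi x) = ∫⁻ y, (if x < y then (1:ℝ≥0∞) else 0) ∂μ := by
    intro x
    rw [← lintegral_indicator_one measurableSet_Ioi]
    exact lintegral_congr fun y => by simp [Set.indicator_apply, Set.mem_Ioi]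
  calc ∫⁻ x in Set.Ici a, μ (Set.Ioi x)
      = ∫⁻ x in Set.Ici a, ∫⁻ y, (if x < y then (1:ℝ≥0∞) else 0) ∂μ :=
        lintegral_congr fun x => hrw x
    _ = ∫⁻ y, (∫⁻ x in Set.Ici a, (if x < y then (1:ℝ≥0∞) else 0)) ∂μ := by
        refine lintegral_lintegral_swap ?_
        refine (Measurable.ite ?_ measurable_const measurable_const).aemeasurable
        exact measurableSet_lt measurable_fst measurable_snd
    _ ≤ ∫⁻ y, ENNReal.ofReal (|a| + |y|) ∂μ := by
        refine lintegral_mono fun y => ?_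
        have h1 : ∫⁻ x in Set.Ici a, (if x < y then (1:ℝ≥0∞) else 0) =
            (volume.restrict (Set.Ici a)) (Set.Iio y) := by
          rw [← lintegral_indicator_one measurableSet_Iio]
          exact lintegral_congr fun x => by simp [Set.indicator_apply, Set.mem_Iio]
        rw [h1, Measure.restrict_apply measurableSet_Iio, Set.Iio_inter_Ici, Real.volume_Ico]
        exact ENNReal.ofReal_le_ofReal (by cases abs_cases a <;> cases abs_cases y <;> linarith)

lemma tail_fin (μ : Measure ℝ) [IsProbabilityMeasure μ] (h : Integrable id μ) (a : ℝ) :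
    ∫⁻ y, ENNReal.ofReal (|a| + |y|) ∂μ < ⊤ := by
  have hle : ∀ y : ℝ, ENNReal.ofReal (|a| + |y|) ≤ ENNReal.ofReal |a| + ENNReal.ofReal |y| :=
    fun y => ENNReal.ofReal_add_le
  refine lt_of_le_of_lt (lintegral_mono hle) ?_
  rw [lintegral_add_left measurable_const]
  refine ENNReal.add_lt_top.mpr ⟨?_, ?_⟩
  · simp [lintegral_const]
  · have h2 := h.hasFiniteIntegral
    rw [HasFiniteIntegral] at h2
    refine lt_of_le_of_lt (le_of_eq ?_) h2
    exact lintegral_congr fun y => (Real.enorm_eq_ofReal_abs y).symm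

lemma indDiff_meas (μ : Measure ℝ) [IsProbabilityMeasure μ] (a : ℝ) :
    Measurable (fun x => |(if a ≤ x then (1:ℝ) else 0) - cdfFun μ x|) :=
  ((Measurable.ite measurableSet_Ici measurable_const measurable_const).sub (cdfFun_meas μ)).abs

lemma indDiff_lint_le (μ : Measure ℝ) [IsProbabilityMeasure μ] (a : ℝ) :
    ∫⁻ x, ENNReal.ofReal |(if a ≤ x then (1:ℝ) else 0) - cdfFun μ x| ≤
      2 * ∫⁻ y, ENNReal.ofReal (|a| + |y|) ∂μ := by
  have hpt : ∀ x, ENNReal.ofReal |(if a ≤ x then (1:ℝ) else 0) - cdfFun μ x| =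
      (Set.Iio a).indicator (fun x => μ (Set.Iic x)) x +
        (Set.Ici a).indicator (fun x => μ (Set.Ioi x)) x := by
    intro x
    by_cases h : a ≤ x
    · rw [if_pos h, Set.indicator_of_notMem (by simpa using h),
        Set.indicator_of_mem (Set.mem_Ici.mpr h), zero_add,
        abs_of_nonneg (by linarith [cdfFun_le_one μ x]), ofReal_one_sub_cdfFun]
    · rw [if_neg h, Set.indicator_of_mem (Set.mem_Iio.mpr (lt_of_not_ge h)),
        Set.indicator_of_notMem (by simpa using h), add_zero, zero_sub, abs_neg,
        abs_of_nonneg (cdfFun_nonneg μ x), ofReal_cdfFun]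
  rw [lintegral_congr hpt,
    lintegral_add_left ((meas_cdf_enn μ).indicator measurableSet_Iio),
    lintegral_indicator measurableSet_Iio, lintegral_indicator measurableSet_Ici, two_mul]
  exact add_le_add (Ltail1 μ a) (Ltail2 μ a)

lemma indDiff_integrable (μ : Measure ℝ) [IsProbabilityMeasure μ] (hμ : Integrable id μ)
    (a : ℝ) : Integrable (fun x => |(if a ≤ x then (1:ℝ) else 0) - cdfFun μ x|) := by
  refine ⟨(indDiff_meas μ a).aestronglyMeasurable, ?_⟩
  rw [HasFiniteIntegral]
  calc ∫⁻ x, ‖|(if a ≤ x then (1:ℝ) else 0) - cdfFun μ x|‖₊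
      = ∫⁻ x, ENNReal.ofReal |(if a ≤ x then (1:ℝ) else 0) - cdfFun μ x| := by
        refine lintegral_congr fun x => ?_
        rw [← enorm_eq_nnnorm, Real.enorm_eq_ofReal_abs, abs_abs]
    _ ≤ 2 * ∫⁻ y, ENNReal.ofReal (|a| + |y|) ∂μ := indDiff_lint_le μ a
    _ < ⊤ := ENNReal.mul_lt_top (by simp) (tail_fin μ hμ a)

lemma abs_moment_eq (μ : Measure ℝ) [IsProbabilityMeasure μ] (hμ : Integrable id μ) (a : ℝ) :
    ∫⁻ y, ENNReal.ofReal (|a| + |y|) ∂μ = ENNReal.ofReal (|a| + ∫ y, |y| ∂μ) := by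
  have hint2 : Integrable (fun y : ℝ => |y|) μ := by simpa using hμ.abs
  have hint : Integrable (fun y : ℝ => |a| + |y|) μ := (integrable_const _).add hint2
  rw [← ofReal_integral_eq_lintegral_ofReal hint
    (Filter.Eventually.of_forall fun y => by positivity)]
  congr 1
  rw [integral_add (integrable_const _) hint2, integral_const]
  simp

lemma indDiff_integral_le (μ : Measure ℝ) [IsProbabilityMeasure μ] (hμ : Integrable id μ)
    (a : ℝ) : ∫ x, |(if a ≤ x then (1:ℝ) else 0) - cdfFun μ x| ≤ 2 * (|a| + ∫ y, |y| ∂μ) := by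
  rw [integral_eq_lintegral_of_nonneg_ae (Filter.Eventually.of_forall fun x => abs_nonneg _)
    (indDiff_meas μ a).aestronglyMeasurable]
  have h2 : (2 : ℝ≥0∞) * ∫⁻ y, ENNReal.ofReal (|a| + |y|) ∂μ =
      ENNReal.ofReal (2 * (|a| + ∫ y, |y| ∂μ)) := by
    rw [abs_moment_eq μ hμ a, ← ENNReal.ofReal_ofNat, ← ENNReal.ofReal_mul (by norm_num)]
  refine ENNReal.toReal_le_of_le_ofReal (by positivity) ?_
  rw [← h2]
  exact indDiff_lint_le μ a

lemma cdfDiff_meas (k μp : Measure ℝ) [IsProbabilityMeasure k] [IsProbabilityMeasure μp] :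
    Measurable (fun x => |cdfFun k x - cdfFun μp x|) :=
  ((cdfFun_meas k).sub (cdfFun_meas μp)).abs

lemma cdfDiff_integrable (k μp : Measure ℝ) [IsProbabilityMeasure k] [IsProbabilityMeasure μp]
    (hk : Integrable id k) (hμp : Integrable id μp) :
    Integrable (fun x => |cdfFun k x - cdfFun μp x|) := by
  refine ⟨(cdfDiff_meas k μp).aestronglyMeasurable, ?_⟩
  rw [HasFiniteIntegral]
  have hpt : ∀ x, (‖|cdfFun k x - cdfFun μp x|‖₊ : ℝ≥0∞) ≤
      ((Set.Iio (0:ℝ)).indicator (fun x => k (Set.Iic x) + μp (Set.Iic x)) x +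
        (Set.Ici (0:ℝ)).indicator (fun x => k (Set.Ioi x) + μp (Set.Ioi x)) x) := by
    intro x
    rw [← enorm_eq_nnnorm, Real.enorm_eq_ofReal_abs, abs_abs]
    by_cases h : (0:ℝ) ≤ x
    · rw [Set.indicator_of_notMem (by simpa using h), Set.indicator_of_mem (Set.mem_Ici.mpr h),
        zero_add, ← ofReal_one_sub_cdfFun k x, ← ofReal_one_sub_cdfFun μp x]
      refine le_trans (ENNReal.ofReal_le_ofReal (abs_le.mpr ⟨?_, ?_⟩)) ENNReal.ofReal_add_le <;>
        · have h1 := cdfFun_nonneg k x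
          have h2 := cdfFun_nonneg μp x
          have h3 := cdfFun_le_one k x
          have h4 := cdfFun_le_one μp x
          linarith
    · rw [Set.indicator_of_mem (Set.mem_Iio.mpr (lt_of_not_ge h)),
        Set.indicator_of_notMem (by simpa using h), add_zero,
        ← ofReal_cdfFun k x, ← ofReal_cdfFun μp x]
      refine le_trans (ENNReal.ofReal_le_ofReal (abs_le.mpr ⟨?_, ?_⟩)) ENNReal.ofReal_add_le <;>
        · have h1 := cdfFun_nonneg k x
          have h2 := cdfFun_nonneg μp x
          linarith
  calc ∫⁻ x, (‖|cdfFun k x - cdfFun μp x|‖₊ : ℝ≥0∞)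
      ≤ ∫⁻ x, ((Set.Iio (0:ℝ)).indicator (fun x => k (Set.Iic x) + μp (Set.Iic x)) x +
          (Set.Ici (0:ℝ)).indicator (fun x => k (Set.Ioi x) + μp (Set.Ioi x)) x) :=
        lintegral_mono hpt
    _ < ⊤ := by
        rw [lintegral_add_left (f := (Set.Iio (0:ℝ)).indicator
            (fun x => k (Set.Iic x) + μp (Set.Iic x))) (((meas_cdf_enn k).add (meas_cdf_enn μp)).indicator
          measurableSet_Iio), lintegral_indicator measurableSet_Iio,
          lintegral_indicator measurableSet_Ici]
        refine ENNReal.add_lt_top.mpr ⟨?_, ?_⟩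
        · rw [lintegral_add_left (meas_cdf_enn k)]
          exact ENNReal.add_lt_top.mpr ⟨lt_of_le_of_lt (Ltail1 k 0) (tail_fin k hk 0),
            lt_of_le_of_lt (Ltail1 μp 0) (tail_fin μp hμp 0)⟩
        · rw [lintegral_add_left (meas_ioi_enn k)]
          exact ENNReal.add_lt_top.mpr ⟨lt_of_le_of_lt (Ltail2 k 0) (tail_fin k hk 0),
            lt_of_le_of_lt (Ltail2 μp 0) (tail_fin μp hμp 0)⟩

lemma cdfDiff_lint_eq (k μp : Measure ℝ) [IsProbabilityMeasure k] [IsProbabilityMeasure μp]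
    (hk : Integrable id k) (hμp : Integrable id μp) :
    ∫⁻ x, ENNReal.ofReal |cdfFun k x - cdfFun μp x| =
      ENNReal.ofReal (∫ x, |cdfFun k x - cdfFun μp x|) :=
  (ofReal_integral_eq_lintegral_ofReal (cdfDiff_integrable k μp hk hμp)
    (Filter.Eventually.of_forall fun x => abs_nonneg _)).symm

lemma meas_sum_range {Ω : Type*} [MeasurableSpace Ω] {f : ℕ → Ω → ℝ}
    (hf : ∀ r, Measurable (f r)) {N : Ω → ℕ} (hN : Measurable N) :
    Measurable fun ω => ∑ r ∈ Finset.range (N ω), f r ω := by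
  have h : Measurable fun p : Ω × ℕ => ∑ r ∈ Finset.range p.2, f r p.1 := by
    refine measurable_from_prod_countable_left fun n => ?_
    exact Finset.measurable_sum (Finset.range n) (fun r _ => hf r)
  exact h.comp (measurable_id.prodMk hN)

noncomputable def cIic (p : Measure ℝ × ℝ) : ℝ≥0∞ :=
  ⨅ q : ℚ, if p.2 < q then p.1 (Set.Iic (q:ℝ)) else ⊤

lemma cIic_meas : Measurable cIic := by
  refine Measurable.iInf fun q => ?_
  refine Measurable.ite ?_ ((Measure.measurable_coe measurableSet_Iic).comp measurable_fst)
    measurable_const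
  exact measurableSet_lt measurable_snd measurable_const

lemma cIic_eq (k : Measure ℝ) [IsProbabilityMeasure k] (x : ℝ) :
    cIic (k, x) = k (Set.Iic x) := by
  refine le_antisymm ?_ (le_iInf fun q => ?_)
  · set s : ℕ → Set ℝ := fun n => Set.Iic (x + 1 / (n + 1)) with hs
    have hanti : Antitone s := by
      intro a b hab
      refine Set.Iic_subset_Iic.mpr ?_
      have h1 : ((a:ℝ) + 1) ≤ (b:ℝ) + 1 := by
        have := (Nat.cast_le (α := ℝ)).mpr hab; linarith
      have h2 : (1:ℝ) / ((b:ℝ)+1) ≤ 1 / ((a:ℝ)+1) := by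
        apply one_div_le_one_div_of_le
        · positivity
        · exact h1
      linarith
    have hinter : ⋂ n, s n = Set.Iic x := by
      ext y
      simp only [Set.mem_iInter, hs, Set.mem_Iic]
      constructor
      · intro h
        by_contra hy
        push_neg at hy
        obtain ⟨n, hn⟩ := exists_nat_one_div_lt (show 0 < y - x by linarith)
        have := h n
        linarith [hn]
      · intro h n
        have : (0:ℝ) < 1 / (n + 1) := by positivity
        linarith
    have htd : Tendsto (fun n => k (s n)) atTop (𝓝 (k (Set.Iic x))) := by
      rw [← hinter]
      exact tendsto_measure_iInter_atTop (fun n => measurableSet_Iic.nullMeasurableSet) hanti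
        ⟨0, (measure_lt_top k _).ne⟩
    refine ge_of_tendsto htd (Filter.Eventually.of_forall fun n => ?_)
    have hpos : (0:ℝ) < 1 / ((n:ℝ)+1) := by positivity
    obtain ⟨q, hq1, hq2⟩ := exists_rat_btwn (show x < x + 1 / ((n:ℝ) + 1) by linarith)
    have hterm : cIic (k, x) ≤ k (Set.Iic (q:ℝ)) := by
      refine le_trans (iInf_le _ q) ?_
      rw [if_pos hq1]
    exact le_trans hterm (measure_mono (Set.Iic_subset_Iic.mpr hq2.le))
  · split_ifs with h
    · exact measure_mono (Set.Iic_subset_Iic.mpr h.le)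
    · exact le_top

lemma ofReal_int_le {α : Type*} [MeasurableSpace α] (μ' : Measure α) (f : α → ℝ)
    (hnn : 0 ≤ᵐ[μ'] f) : ENNReal.ofReal (∫ a, f a ∂μ') ≤ ∫⁻ a, ENNReal.ofReal (f a) ∂μ' := by
  by_cases h : Integrable f μ'
  · rw [ofReal_integral_eq_lintegral_ofReal h hnn]
  · rw [integral_undef h]
    simp

lemma empCDF_joint_meas {Ω : Type*} [MeasurableSpace Ω] (m : ℕ) {R : ℕ → Ω → ℝ}
    (hR : ∀ i, Measurable (R i)) :
    Measurable fun p : Ω × ℝ => empCDF m R p.1 p.2 := by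
  unfold empCDF
  refine measurable_const.mul ?_
  refine Finset.measurable_sum _ fun i _ => ?_
  exact Measurable.ite (measurableSet_le ((hR i).comp measurable_fst) measurable_snd)
    measurable_const measurable_const


noncomputable def gwt (r : ℕ) (b : ℝ × ℕ × (ℕ → ℝ)) : ℝ≥0∞ :=
  if r < b.2.1 then ENNReal.ofReal |b.2.2 r| else 0

lemma gwt_meas (r : ℕ) : Measurable (gwt r) := by
  refine Measurable.ite ?_ (ENNReal.measurable_ofReal.comp (Measurable.abs ?_)) measurable_const
  · exact measurableSet_lt measurable_const (measurable_fst.comp measurable_snd)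
  · exact (measurable_pi_apply r).comp (measurable_snd.comp measurable_snd)

noncomputable def PsiF (μprev : Measure ℝ) (p : Measure ℝ × ℝ) : ℝ≥0∞ :=
  ENNReal.ofReal |pinvSur p.1 p.2 - pinvSur μprev p.2|

lemma PsiF_meas (μprev : Measure ℝ) : Measurable (PsiF μprev) :=
  ENNReal.measurable_ofReal.comp ((pinvSur_meas.sub
    (pinvSur_meas.comp (measurable_const.prodMk measurable_snd))).abs)

lemma lemFactor {Ω : Type*} [MeasurableSpace Ω] (P : Measure Ω) [IsProbabilityMeasure P]
    (ν : Measure (ℝ × ℕ × (ℕ → ℝ))) [IsProbabilityMeasure ν]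
    (X : Ω → ℝ × ℕ × (ℕ → ℝ)) (Uf : Ω → ℝ) (κ : Ω → Measure ℝ)
    (hX : Measurable X) (hU : Measurable Uf) (hκ : Measurable κ)
    (hXlaw : P.map X = ν) (hUlaw : P.map Uf = volume.restrict (Set.Icc (0:ℝ) 1))
    (hXU : IndepFun X Uf P) (hXUκ : IndepFun (fun ω => (X ω, Uf ω)) κ P)
    (g : (ℝ × ℕ × (ℕ → ℝ)) → ℝ≥0∞) (hg : Measurable g)
    (Ψ : Measure ℝ × ℝ → ℝ≥0∞) (hΨ : Measurable Ψ) :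
    ∫⁻ ω, g (X ω) * Ψ (κ ω, Uf ω) ∂P =
      (∫⁻ b, g b ∂ν) *
        ∫⁻ t in Set.Icc (0:ℝ) 1, (∫⁻ k, Ψ (k, t) ∂(P.map κ)) := by
  haveI : IsProbabilityMeasure (P.map κ) := Measure.isProbabilityMeasure_map hκ.aemeasurable
  haveI : IsProbabilityMeasure (volume.restrict (Set.Icc (0:ℝ) 1)) := by
    constructor
    rw [Measure.restrict_apply_univ, Real.volume_Icc]
    norm_num
  have hpairmeas : Measurable fun ω => (X ω, Uf ω) := hX.prodMk hU
  have hpairlaw : P.map (fun ω => (X ω, Uf ω)) =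
      ν.prod (volume.restrict (Set.Icc (0:ℝ) 1)) := by
    rw [← hXlaw, ← hUlaw]
    exact (indepFun_iff_map_prod_eq_prod_map_map hX.aemeasurable hU.aemeasurable).mp hXU
  have htriple : P.map (fun ω => ((X ω, Uf ω), κ ω)) =
      (ν.prod (volume.restrict (Set.Icc (0:ℝ) 1))).prod (P.map κ) := by
    rw [← hpairlaw]
    exact (indepFun_iff_map_prod_eq_prod_map_map
      hpairmeas.aemeasurable hκ.aemeasurable).mp hXUκ
  have hFmeas : Measurable fun p : ((ℝ × ℕ × (ℕ → ℝ)) × ℝ) × Measure ℝ =>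
      g p.1.1 * Ψ (p.2, p.1.2) :=
    (hg.comp (measurable_fst.comp measurable_fst)).mul
      (hΨ.comp (measurable_snd.prodMk (measurable_snd.comp measurable_fst)))
  have hinner : Measurable fun t => ∫⁻ k, Ψ (k, t) ∂(P.map κ) :=
    Measurable.lintegral_prod_right' (f := fun p : ℝ × Measure ℝ => Ψ (p.2, p.1))
      (hΨ.comp (measurable_snd.prodMk measurable_fst))
  calc ∫⁻ ω, g (X ω) * Ψ (κ ω, Uf ω) ∂P
      = ∫⁻ p : ((ℝ × ℕ × (ℕ → ℝ)) × ℝ) × Measure ℝ, g p.1.1 * Ψ (p.2, p.1.2)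
          ∂(P.map (fun ω => ((X ω, Uf ω), κ ω))) := by
        rw [lintegral_map hFmeas (hpairmeas.prodMk hκ)]
    _ = ∫⁻ p : ((ℝ × ℕ × (ℕ → ℝ)) × ℝ) × Measure ℝ, g p.1.1 * Ψ (p.2, p.1.2)
          ∂((ν.prod (volume.restrict (Set.Icc (0:ℝ) 1))).prod (P.map κ)) := by
        rw [htriple]
    _ = ∫⁻ bt : (ℝ × ℕ × (ℕ → ℝ)) × ℝ, (∫⁻ k, g bt.1 * Ψ (k, bt.2) ∂(P.map κ))
          ∂(ν.prod (volume.restrict (Set.Icc (0:ℝ) 1))) :=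
        lintegral_prod _ hFmeas.aemeasurable
    _ = ∫⁻ bt : (ℝ × ℕ × (ℕ → ℝ)) × ℝ, g bt.1 * (∫⁻ k, Ψ (k, bt.2) ∂(P.map κ))
          ∂(ν.prod (volume.restrict (Set.Icc (0:ℝ) 1))) := by
        refine lintegral_congr fun bt => ?_
        exact lintegral_const_mul _ (hΨ.comp (measurable_id.prodMk measurable_const))
    _ = (∫⁻ b, g b ∂ν) *
          ∫⁻ t in Set.Icc (0:ℝ) 1, (∫⁻ k, Ψ (k, t) ∂(P.map κ)) :=
        lintegral_prod_mul hg.aemeasurable hinner.aemeasurable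

lemma lemFactor2 {Ω : Type*} [MeasurableSpace Ω] (P : Measure Ω) [IsProbabilityMeasure P]
    (κ : Ω → Measure ℝ) (hκmeas : Measurable κ) (hκprob : ∀ ω, IsProbabilityMeasure (κ ω))
    (hκint : ∀ ω, Integrable id (κ ω))
    (μprev : Measure ℝ) [IsProbabilityMeasure μprev] (hμint : Integrable id μprev)
    (δ : ℝ)
    (hd1int : Integrable (fun ω => ∫ x, |cdfFun (κ ω) x - cdfFun μprev x|) P)
    (hδ : ∫ ω, (∫ x, |cdfFun (κ ω) x - cdfFun μprev x|) ∂P ≤ δ) :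
    ∫⁻ t in Set.Icc (0:ℝ) 1, (∫⁻ k, PsiF μprev (k, t) ∂(P.map κ)) ≤ ENNReal.ofReal δ := by
  haveI : IsProbabilityMeasure (P.map κ) := Measure.isProbabilityMeasure_map hκmeas.aemeasurable
  have hΨ : Measurable (PsiF μprev) := PsiF_meas μprev
  have hswap : (∫⁻ t in Set.Icc (0:ℝ) 1, ∫⁻ k, PsiF μprev (k, t) ∂(P.map κ)) =
      ∫⁻ k, (∫⁻ t in Set.Icc (0:ℝ) 1, PsiF μprev (k, t)) ∂(P.map κ) := by
    refine lintegral_lintegral_swap ?_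
    exact (hΨ.comp (measurable_snd.prodMk measurable_fst)).aemeasurable
  rw [hswap]
  have hae : ∀ᵐ k ∂(P.map κ), k Set.univ = 1 :=
    (ae_map_iff hκmeas.aemeasurable
      ((Measure.measurable_coe MeasurableSet.univ) (measurableSet_singleton 1))).mpr
      (Filter.Eventually.of_forall fun ω => measure_univ)
  have hDmeas : Measurable fun k : Measure ℝ =>
      ∫⁻ x, ENNReal.ofReal |(cIic (k, x)).toReal - cdfFun μprev x| :=
    Measurable.lintegral_prod_right' (ENNReal.measurable_ofReal.comp
      (((ENNReal.measurable_toReal.comp cIic_meas).sub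
        ((cdfFun_meas μprev).comp measurable_snd)).abs))
  have hstep : ∀ᵐ k ∂(P.map κ),
      (∫⁻ t in Set.Icc (0:ℝ) 1, PsiF μprev (k, t)) ≤
        ∫⁻ x, ENNReal.ofReal |(cIic (k, x)).toReal - cdfFun μprev x| := by
    filter_upwards [hae] with k hk
    haveI : IsProbabilityMeasure k := ⟨hk⟩
    calc ∫⁻ t in Set.Icc (0:ℝ) 1, PsiF μprev (k, t)
        = ∫⁻ t in Set.Ioo (0:ℝ) 1, PsiF μprev (k, t) := by
          rw [← Measure.restrict_congr_set Ioo_ae_eq_Icc]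
      _ = ∫⁻ t in Set.Ioo (0:ℝ) 1,
          ENNReal.ofReal |pseudoInv (cdfFun k) t - pseudoInv (cdfFun μprev) t| := by
          refine setLIntegral_congr_fun measurableSet_Ioo
            (fun t ht => ?_)
          unfold PsiF
          rw [pinvSur_eq k ht, pinvSur_eq μprev ht]
      _ ≤ ∫⁻ x, ENNReal.ofReal |cdfFun k x - cdfFun μprev x| := quantile_le k μprev
      _ = ∫⁻ x, ENNReal.ofReal |(cIic (k, x)).toReal - cdfFun μprev x| := by
          refine lintegral_congr fun x => ?_
          rw [cIic_eq k x]
          rfl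
  calc ∫⁻ k, (∫⁻ t in Set.Icc (0:ℝ) 1, PsiF μprev (k, t)) ∂(P.map κ)
      ≤ ∫⁻ k, (∫⁻ x, ENNReal.ofReal |(cIic (k, x)).toReal - cdfFun μprev x|) ∂(P.map κ) :=
        lintegral_mono_ae hstep
    _ = ∫⁻ ω, (∫⁻ x, ENNReal.ofReal |(cIic (κ ω, x)).toReal - cdfFun μprev x|) ∂P :=
        lintegral_map hDmeas hκmeas
    _ = ∫⁻ ω, ENNReal.ofReal (∫ x, |cdfFun (κ ω) x - cdfFun μprev x|) ∂P := by
        refine lintegral_congr fun ω => ?_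
        haveI := hκprob ω
        calc (∫⁻ x, ENNReal.ofReal |(cIic (κ ω, x)).toReal - cdfFun μprev x|)
            = ∫⁻ x, ENNReal.ofReal |cdfFun (κ ω) x - cdfFun μprev x| := by
              refine lintegral_congr fun x => ?_
              rw [cIic_eq (κ ω) x]
              rfl
          _ = ENNReal.ofReal (∫ x, |cdfFun (κ ω) x - cdfFun μprev x|) :=
              cdfDiff_lint_eq (κ ω) μprev (hκint ω) hμint
    _ = ENNReal.ofReal (∫ ω, (∫ x, |cdfFun (κ ω) x - cdfFun μprev x|) ∂P) :=
        (ofReal_integral_eq_lintegral_ofReal hd1int (Filter.Eventually.of_forall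
          fun ω => integral_nonneg fun x => abs_nonneg _)).symm
    _ ≤ ENNReal.ofReal δ := ENNReal.ofReal_le_ofReal hδ

lemma lemSum (ν : Measure (ℝ × ℕ × (ℕ → ℝ))) [IsProbabilityMeasure ν]
    (hνint : Integrable (fun v => ∑ r ∈ Finset.range v.2.1, |v.2.2 r|) ν) :
    (∑' r, ∫⁻ b, gwt r b ∂ν) =
      ENNReal.ofReal (∫ v, ∑ r ∈ Finset.range v.2.1, |v.2.2 r| ∂ν) := by
  rw [← lintegral_tsum (fun r => (gwt_meas r).aemeasurable)]
  have hpt : ∀ b : ℝ × ℕ × (ℕ → ℝ),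
      (∑' r, gwt r b) = ENNReal.ofReal (∑ r ∈ Finset.range b.2.1, |b.2.2 r|) := by
    intro b
    rw [tsum_eq_sum (s := Finset.range b.2.1)
      (fun r hr => by unfold gwt; exact if_neg (by simpa using hr))]
    rw [ENNReal.ofReal_sum_of_nonneg (fun r _ => abs_nonneg _)]
    refine Finset.sum_congr rfl fun r hr => ?_
    unfold gwt
    exact if_pos (Finset.mem_range.mp hr)
  rw [lintegral_congr hpt, ← ofReal_integral_eq_lintegral_ofReal hνint
    (Filter.Eventually.of_forall fun b => Finset.sum_nonneg fun r _ => abs_nonneg _)]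

lemma lemPer {Ω : Type*} [MeasurableSpace Ω] (P : Measure Ω) [IsProbabilityMeasure P]
    (ν : Measure (ℝ × ℕ × (ℕ → ℝ))) [IsProbabilityMeasure ν]
    (hνint : Integrable (fun v => ∑ r ∈ Finset.range v.2.1, |v.2.2 r|) ν)
    (X : Ω → ℝ × ℕ × (ℕ → ℝ)) (Uv : ℕ → Ω → ℝ) (κ : Ω → Measure ℝ)
    (hX : Measurable X) (hU : ∀ r, Measurable (Uv r)) (hκ : Measurable κ)
    (hXlaw : P.map X = ν) (hUlaw : ∀ r, P.map (Uv r) = volume.restrict (Set.Icc (0:ℝ) 1))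
    (hXU : ∀ r, IndepFun X (Uv r) P)
    (hXUκ : ∀ r, IndepFun (fun ω => (X ω, Uv r ω)) κ P)
    (μprev : Measure ℝ) [IsProbabilityMeasure μprev]
    (δ ρ1 : ℝ) (hρ1 : ρ1 = ∫ v, ∑ r ∈ Finset.range v.2.1, |v.2.2 r| ∂ν)
    (hfac2 : ∫⁻ t in Set.Icc (0:ℝ) 1, (∫⁻ k, PsiF μprev (k, t) ∂(P.map κ)) ≤
      ENNReal.ofReal δ) :
    ∫⁻ ω, ENNReal.ofReal
        |((∑ r ∈ Finset.range (X ω).2.1, (X ω).2.2 r * pinvSur (κ ω) (Uv r ω)) + (X ω).1) -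
          ((∑ r ∈ Finset.range (X ω).2.1, (X ω).2.2 r * pinvSur μprev (Uv r ω)) + (X ω).1)|
      ∂P ≤ ENNReal.ofReal ρ1 * ENNReal.ofReal δ := by
  have hptw : ∀ ω, ENNReal.ofReal
      |((∑ r ∈ Finset.range (X ω).2.1, (X ω).2.2 r * pinvSur (κ ω) (Uv r ω)) + (X ω).1) -
        ((∑ r ∈ Finset.range (X ω).2.1, (X ω).2.2 r * pinvSur μprev (Uv r ω)) + (X ω).1)| ≤
      ∑' r, gwt r (X ω) * PsiF μprev (κ ω, Uv r ω) := by
    intro ω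
    have h1 : |((∑ r ∈ Finset.range (X ω).2.1, (X ω).2.2 r * pinvSur (κ ω) (Uv r ω)) + (X ω).1) -
        ((∑ r ∈ Finset.range (X ω).2.1, (X ω).2.2 r * pinvSur μprev (Uv r ω)) + (X ω).1)| ≤
        ∑ r ∈ Finset.range (X ω).2.1,
          |(X ω).2.2 r| * |pinvSur (κ ω) (Uv r ω) - pinvSur μprev (Uv r ω)| := by
      rw [add_sub_add_right_eq_sub, ← Finset.sum_sub_distrib]
      refine le_trans (Finset.abs_sum_le_sum_abs _ _)
        (le_of_eq (Finset.sum_congr rfl fun r _ => ?_))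
      rw [← mul_sub, abs_mul]
    refine le_trans (ENNReal.ofReal_le_ofReal h1) ?_
    calc ENNReal.ofReal (∑ r ∈ Finset.range (X ω).2.1,
            |(X ω).2.2 r| * |pinvSur (κ ω) (Uv r ω) - pinvSur μprev (Uv r ω)|)
        = ∑ r ∈ Finset.range (X ω).2.1, ENNReal.ofReal
            (|(X ω).2.2 r| * |pinvSur (κ ω) (Uv r ω) - pinvSur μprev (Uv r ω)|) :=
          ENNReal.ofReal_sum_of_nonneg (fun r _ => by positivity)
      _ = ∑ r ∈ Finset.range (X ω).2.1, gwt r (X ω) * PsiF μprev (κ ω, Uv r ω) := by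
          refine Finset.sum_congr rfl fun r hr => ?_
          unfold gwt PsiF
          rw [if_pos (Finset.mem_range.mp hr), ENNReal.ofReal_mul (abs_nonneg _)]
      _ ≤ ∑' r, gwt r (X ω) * PsiF μprev (κ ω, Uv r ω) := ENNReal.sum_le_tsum _
  refine le_trans (lintegral_mono hptw) ?_
  rw [lintegral_tsum (f := fun r ω => gwt r (X ω) * PsiF μprev (κ ω, Uv r ω)) (fun r =>
    (Measurable.mul ((gwt_meas r).comp hX)
      ((PsiF_meas μprev).comp (hκ.prodMk (hU r)))).aemeasurable)]
  have hfac : ∀ r : ℕ, ∫⁻ ω, gwt r (X ω) * PsiF μprev (κ ω, Uv r ω) ∂P =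
      (∫⁻ b, gwt r b ∂ν) *
        ∫⁻ t in Set.Icc (0:ℝ) 1, (∫⁻ k, PsiF μprev (k, t) ∂(P.map κ)) := fun r =>
    lemFactor P ν X (Uv r) κ hX (hU r) hκ hXlaw (hUlaw r) (hXU r) (hXUκ r)
      (gwt r) (gwt_meas r) (PsiF μprev) (PsiF_meas μprev)
  calc ∑' r, ∫⁻ ω, gwt r (X ω) * PsiF μprev (κ ω, Uv r ω) ∂P
      = ∑' r, (∫⁻ b, gwt r b ∂ν) *
          ∫⁻ t in Set.Icc (0:ℝ) 1, (∫⁻ k, PsiF μprev (k, t) ∂(P.map κ)) := tsum_congr hfac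
    _ ≤ ∑' r, (∫⁻ b, gwt r b ∂ν) * ENNReal.ofReal δ :=
        ENNReal.tsum_le_tsum fun r => mul_le_mul_right hfac2 _
    _ = ENNReal.ofReal ρ1 * ENNReal.ofReal δ := by
        rw [ENNReal.tsum_mul_right, lemSum ν hνint, ← hρ1]

end Helpers

set_option maxHeartbeats 3000000 in
/-- Induction step of the main theorem: if `E[d₁(F̂_{j-1,m}, F_{j-1})] ≤ δ` and
`E[d₁(G_m, F_j)] ≤ ε` for the empirical distribution `G_m` of `m` i.i.d. copies of
`R^{(j)}` (coupled with the bootstrap pool via common uniforms and branching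
vectors), then `E[d₁(F̂_{j,m}, F_j)] ≤ ρ₁ δ + ε`, where `ρ₁ = E[∑_{r≤N} |C_r|]`. -/
theorem stmt11 {Ω : Type*} [MeasurableSpace Ω] (P : Measure Ω) [IsProbabilityMeasure P]
    (m : ℕ) (hm : 1 ≤ m)
    (ν : Measure (ℝ × ℕ × (ℕ → ℝ))) [IsProbabilityMeasure ν]
    (hνint : Integrable (fun v => ∑ r ∈ Finset.range v.2.1, |v.2.2 r|) ν)
    (B : ℕ → Ω → ℝ × ℕ × (ℕ → ℝ)) (U : ℕ → ℕ → Ω → ℝ)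
    (hBmeas : ∀ i, Measurable (B i)) (hUmeas : ∀ i r, Measurable (U i r))
    (hBlaw : ∀ i, P.map (B i) = ν)
    (hUlaw : ∀ i r, P.map (U i r) = volume.restrict (Set.Icc (0 : ℝ) 1))
    (hindep : iIndepFun (lvlFam B U) P)
    -- the random distribution function F̂_{j-1,m} (CDF of the random measure κ),
    -- independent of the level-j branching vectors and uniforms
    (κ : Ω → Measure ℝ) (hκmeas : Measurable κ)
    (hκprob : ∀ ω, IsProbabilityMeasure (κ ω))
    (hκint : ∀ ω, Integrable id (κ ω))
    (hκindep : IndepFun (fun ω => (fun i => B i ω, fun i r => U i r ω)) κ P)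
    -- the fixed distribution F_{j-1}
    (μprev : Measure ℝ) [IsProbabilityMeasure μprev] (hμint : Integrable id μprev)
    -- the coupled pools
    (Rhat Rj : ℕ → Ω → ℝ)
    (hRhat : ∀ i ω, Rhat i ω =
      (∑ r ∈ Finset.range (B i ω).2.1,
        (B i ω).2.2 r * pseudoInv (cdfFun (κ ω)) (U i r ω)) + (B i ω).1)
    (hRj : ∀ i ω, Rj i ω =
      (∑ r ∈ Finset.range (B i ω).2.1,
        (B i ω).2.2 r * pseudoInv (cdfFun μprev) (U i r ω)) + (B i ω).1)
    -- the distribution F_j of R^(j)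
    (μj : Measure ℝ) (hμj : μj = P.map (Rj 0))
    (hRjint : ∀ i, Integrable (Rj i) P) (hRhatint : ∀ i, Integrable (Rhat i) P)
    (ρ1 δ ε : ℝ)
    (hρ1 : ρ1 = ∫ v, ∑ r ∈ Finset.range v.2.1, |v.2.2 r| ∂ν)
    (hd1int : Integrable (fun ω => ∫ x, |cdfFun (κ ω) x - cdfFun μprev x|) P)
    (hδ : ∫ ω, (∫ x, |cdfFun (κ ω) x - cdfFun μprev x|) ∂P ≤ δ)
    (hε : ∫ ω, (∫ x, |empCDF m Rj ω x - cdfFun μj x|) ∂P ≤ ε) :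
    ∫ ω, (∫ x, |empCDF m Rhat ω x - cdfFun μj x|) ∂P ≤ ρ1 * δ + ε := by
  -- nonnegativity of the constants
  have hρ1nn : 0 ≤ ρ1 := by
    rw [hρ1]
    exact integral_nonneg fun v => Finset.sum_nonneg fun r _ => abs_nonneg _
  have hδnn : 0 ≤ δ :=
    le_trans (integral_nonneg fun ω => integral_nonneg fun x => abs_nonneg _) hδ
  have hεnn : 0 ≤ ε :=
    le_trans (integral_nonneg fun ω => integral_nonneg fun x => abs_nonneg _) hε
  have hRHS : 0 ≤ ρ1 * δ + ε := by positivity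
  have hmR : (m:ℝ) ≠ 0 := Nat.cast_ne_zero.mpr (by omega)
  -- the uniform law
  haveI hunifprob : IsProbabilityMeasure (volume.restrict (Set.Icc (0:ℝ) 1)) := by
    constructor
    rw [Measure.restrict_apply_univ, Real.volume_Icc]
    norm_num
  -- measurable surrogates for the pools
  set Rhat' : ℕ → Ω → ℝ := fun i ω =>
    (∑ r ∈ Finset.range (B i ω).2.1, (B i ω).2.2 r * pinvSur (κ ω) (U i r ω)) + (B i ω).1
    with hRhat'def
  set Rj' : ℕ → Ω → ℝ := fun i ω =>
    (∑ r ∈ Finset.range (B i ω).2.1, (B i ω).2.2 r * pinvSur μprev (U i r ω)) + (B i ω).1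
    with hRj'def
  have hNmeas : ∀ i, Measurable fun ω => (B i ω).2.1 :=
    fun i => (measurable_fst.comp measurable_snd).comp (hBmeas i)
  have hCmeas : ∀ i r, Measurable fun ω => (B i ω).2.2 r :=
    fun i r => ((measurable_pi_apply r).comp (measurable_snd.comp measurable_snd)).comp (hBmeas i)
  have hQmeas : ∀ i, Measurable fun ω => (B i ω).1 := fun i => measurable_fst.comp (hBmeas i)
  have hRhat'meas : ∀ i, Measurable (Rhat' i) := by
    intro i
    refine Measurable.add ?_ (hQmeas i)
    refine meas_sum_range (fun r => ?_) (hNmeas i)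
    exact (hCmeas i r).mul (pinvSur_meas.comp (hκmeas.prodMk (hUmeas i r)))
  have hRj'meas : ∀ i, Measurable (Rj' i) := by
    intro i
    refine Measurable.add ?_ (hQmeas i)
    refine meas_sum_range (fun r => ?_) (hNmeas i)
    exact (hCmeas i r).mul (pinvSur_meas.comp (measurable_const.prodMk (hUmeas i r)))
  -- almost every ω has all uniforms in (0,1)
  have hGood : ∀ᵐ ω ∂P, ∀ i r : ℕ, U i r ω ∈ Set.Ioo (0:ℝ) 1 := by
    rw [ae_all_iff]
    intro i
    rw [ae_all_iff]
    intro r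
    have h1 : ∀ᵐ t ∂(P.map (U i r)), t ∈ Set.Ioo (0:ℝ) 1 := by
      rw [hUlaw i r, ae_iff]
      rw [Measure.restrict_apply (by exact (measurableSet_Ioo (a := (0:ℝ)) (b := 1)).compl)]
      refine measure_mono_null (t := ({0, 1} : Set ℝ)) ?_ ?_
      · rintro t ⟨ht1, ht2⟩
        simp only [Set.mem_Ioo, not_and_or, not_lt, Set.mem_setOf_eq] at ht1
        rcases ht1 with h | h
        · exact Or.inl (le_antisymm h ht2.1)
        · exact Or.inr (le_antisymm ht2.2 h)
      · exact Set.Countable.measure_zero (Set.to_countable _) volume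
    exact (ae_map_iff (hUmeas i r).aemeasurable measurableSet_Ioo).mp h1
  -- surrogate pools agree a.e.
  have hRhatae : ∀ i, Rhat i =ᵐ[P] Rhat' i := by
    intro i
    filter_upwards [hGood] with ω hω
    rw [hRhat i ω, hRhat'def]
    haveI := hκprob ω
    congr 1
    refine Finset.sum_congr rfl fun r _ => ?_
    rw [pinvSur_eq (κ ω) (hω i r)]
  have hRjae : ∀ i, Rj i =ᵐ[P] Rj' i := by
    intro i
    filter_upwards [hGood] with ω hω
    rw [hRj i ω, hRj'def]
    congr 1
    refine Finset.sum_congr rfl fun r _ => ?_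
    rw [pinvSur_eq μprev (hω i r)]
  have hRj0ae : AEMeasurable (Rj 0) P := (hRj'meas 0).aemeasurable.congr (hRjae 0).symm
  haveI hμjprob : IsProbabilityMeasure μj := by
    rw [hμj]
    exact Measure.isProbabilityMeasure_map hRj0ae
  have hμjint : Integrable id μj := by
    rw [hμj]
    rw [integrable_map_measure aestronglyMeasurable_id hRj0ae]
    exact hRjint 0
  have hallae : ∀ᵐ ω ∂P, ∀ i, Rhat i ω = Rhat' i ω ∧ Rj i ω = Rj' i ω := by
    rw [ae_all_iff]
    exact fun i => (hRhatae i).and (hRjae i)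
  set I : Ω → ℝ := fun ω => ∫ x, |empCDF m Rhat ω x - cdfFun μj x| with hIdef
  by_cases hIint : Integrable I P
  swap
  · rw [integral_undef hIint]
    exact hRHS
  rw [integral_eq_lintegral_of_nonneg_ae
    (Filter.Eventually.of_forall fun ω => integral_nonneg fun x => abs_nonneg _)
    hIint.aestronglyMeasurable]
  refine ENNReal.toReal_le_of_le_ofReal hRHS ?_
  set A : Ω → ℝ≥0∞ := fun ω => ∫⁻ x, ENNReal.ofReal |empCDF m Rhat' ω x - empCDF m Rj' ω x|
    with hAdef
  set Bf : Ω → ℝ≥0∞ := fun ω => ∫⁻ x, ENNReal.ofReal |empCDF m Rj' ω x - cdfFun μj x|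
    with hBdef
  have hABjoint : Measurable fun p : Ω × ℝ =>
      ENNReal.ofReal |empCDF m Rhat' p.1 p.2 - empCDF m Rj' p.1 p.2| :=
    ENNReal.measurable_ofReal.comp
      (((empCDF_joint_meas m hRhat'meas).sub (empCDF_joint_meas m hRj'meas)).abs)
  have hAmeas : Measurable A := hABjoint.lintegral_prod_right'
  have hstep1 : ∀ᵐ ω ∂P, ENNReal.ofReal (I ω) ≤ A ω + Bf ω := by
    filter_upwards [hallae] with ω hω
    have hemp1 : ∀ x, empCDF m Rhat ω x = empCDF m Rhat' ω x := by
      intro x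
      unfold empCDF
      congr 1
      exact Finset.sum_congr rfl fun i _ => by rw [(hω i).1]
    calc ENNReal.ofReal (I ω)
        ≤ ∫⁻ x, ENNReal.ofReal |empCDF m Rhat ω x - cdfFun μj x| :=
          ofReal_int_le volume _ (Filter.Eventually.of_forall fun x => abs_nonneg _)
      _ = ∫⁻ x, ENNReal.ofReal |empCDF m Rhat' ω x - cdfFun μj x| :=
          lintegral_congr fun x => by rw [hemp1 x]
      _ ≤ ∫⁻ x, (ENNReal.ofReal |empCDF m Rhat' ω x - empCDF m Rj' ω x| +
            ENNReal.ofReal |empCDF m Rj' ω x - cdfFun μj x|) := by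
          refine lintegral_mono fun x => ?_
          refine le_trans (ENNReal.ofReal_le_ofReal (abs_sub_le _ _ _)) ENNReal.ofReal_add_le
      _ = A ω + Bf ω := by
          rw [hAdef, hBdef]
          exact lintegral_add_left (hABjoint.comp (measurable_prodMk_left (x := ω))) _
  have hAbound : ∫⁻ ω, A ω ∂P ≤ ENNReal.ofReal (ρ1 * δ) := by
    have hApt : ∀ ω, A ω ≤ ENNReal.ofReal (1/m : ℝ) *
        ∑ i ∈ Finset.range m, ENNReal.ofReal |Rhat' i ω - Rj' i ω| := by
      intro ω
      have hxmeas : ∀ i : ℕ, Measurable fun x => ENNReal.ofReal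
          |(if Rhat' i ω ≤ x then (1:ℝ) else 0) - (if Rj' i ω ≤ x then (1:ℝ) else 0)| :=
        fun i => ENNReal.measurable_ofReal.comp
          (((Measurable.ite (measurableSet_le measurable_const measurable_id)
              measurable_const measurable_const).sub
            (Measurable.ite (measurableSet_le measurable_const measurable_id)
              measurable_const measurable_const)).abs)
      have hpt : ∀ x, ENNReal.ofReal |empCDF m Rhat' ω x - empCDF m Rj' ω x| ≤
          ENNReal.ofReal (1/m:ℝ) * ∑ i ∈ Finset.range m, ENNReal.ofReal
            |(if Rhat' i ω ≤ x then (1:ℝ) else 0) - (if Rj' i ω ≤ x then (1:ℝ) else 0)| := by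
        intro x
        have h1 : empCDF m Rhat' ω x - empCDF m Rj' ω x = (1/m:ℝ) * ∑ i ∈ Finset.range m,
            ((if Rhat' i ω ≤ x then (1:ℝ) else 0) - (if Rj' i ω ≤ x then (1:ℝ) else 0)) := by
          unfold empCDF
          rw [← mul_sub, ← Finset.sum_sub_distrib]
        rw [h1, abs_mul, abs_of_nonneg (by positivity : (0:ℝ) ≤ 1/(m:ℝ)),
          ENNReal.ofReal_mul (by positivity : (0:ℝ) ≤ 1/(m:ℝ))]
        refine mul_le_mul_right ?_ _
        refine le_trans (ENNReal.ofReal_le_ofReal (Finset.abs_sum_le_sum_abs _ _)) ?_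
        rw [ENNReal.ofReal_sum_of_nonneg (fun i _ => abs_nonneg _)]
      calc A ω ≤ ∫⁻ x, (ENNReal.ofReal (1/m:ℝ) * ∑ i ∈ Finset.range m, ENNReal.ofReal
            |(if Rhat' i ω ≤ x then (1:ℝ) else 0) - (if Rj' i ω ≤ x then (1:ℝ) else 0)|) :=
            lintegral_mono hpt
        _ = ENNReal.ofReal (1/m:ℝ) * ∑ i ∈ Finset.range m, ∫⁻ x, ENNReal.ofReal
            |(if Rhat' i ω ≤ x then (1:ℝ) else 0) - (if Rj' i ω ≤ x then (1:ℝ) else 0)| := by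
            rw [lintegral_const_mul _ (Finset.measurable_sum _ fun i _ => hxmeas i),
              lintegral_finset_sum _ fun i _ => hxmeas i]
        _ = ENNReal.ofReal (1/m:ℝ) * ∑ i ∈ Finset.range m,
            ENNReal.ofReal |Rhat' i ω - Rj' i ω| := by
            congr 1
            exact Finset.sum_congr rfl fun i _ => lint_ind_diff _ _
    have hsummeas : ∀ i, Measurable fun ω => ENNReal.ofReal |Rhat' i ω - Rj' i ω| :=
      fun i => ENNReal.measurable_ofReal.comp (((hRhat'meas i).sub (hRj'meas i)).abs)
    have hfac2 : ∫⁻ t in Set.Icc (0:ℝ) 1, (∫⁻ k, PsiF μprev (k, t) ∂(P.map κ)) ≤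
        ENNReal.ofReal δ := lemFactor2 P κ hκmeas hκprob hκint μprev hμint δ hd1int hδ
    have hper : ∀ i, ∫⁻ ω, ENNReal.ofReal |Rhat' i ω - Rj' i ω| ∂P ≤
        ENNReal.ofReal ρ1 * ENNReal.ofReal δ := by
      intro i
      have hXU : ∀ r, IndepFun (B i) (U i r) P := by
        intro r
        have h := hindep.indepFun (show (Sum.inl i : lvlIdx) ≠ Sum.inr (i, r) by
          intro hcon
          cases hcon)
        exact h
      have hXUκ : ∀ r, IndepFun (fun ω => (B i ω, U i r ω)) κ P := by
        intro r
        have hφ : Measurable fun p : (ℕ → ℝ × ℕ × (ℕ → ℝ)) × (ℕ → ℕ → ℝ) =>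
            (p.1 i, p.2 i r) :=
          ((measurable_pi_apply i).comp measurable_fst).prodMk
            ((measurable_pi_apply r).comp ((measurable_pi_apply i).comp measurable_snd))
        exact hκindep.comp hφ measurable_id
      have := lemPer P ν hνint (B i) (fun r => U i r) κ (hBmeas i) (hUmeas i) hκmeas
        (hBlaw i) (hUlaw i) hXU hXUκ μprev δ ρ1 hρ1 hfac2
      simpa [hRhat'def, hRj'def] using this
    calc ∫⁻ ω, A ω ∂P
        ≤ ∫⁻ ω, (ENNReal.ofReal (1/m : ℝ) *
            ∑ i ∈ Finset.range m, ENNReal.ofReal |Rhat' i ω - Rj' i ω|) ∂P :=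
          lintegral_mono hApt
      _ = ENNReal.ofReal (1/m : ℝ) * ∑ i ∈ Finset.range m,
            ∫⁻ ω, ENNReal.ofReal |Rhat' i ω - Rj' i ω| ∂P := by
          rw [lintegral_const_mul _ (Finset.measurable_sum _ fun i _ => hsummeas i),
            lintegral_finset_sum _ fun i _ => hsummeas i]
      _ ≤ ENNReal.ofReal (1/m : ℝ) * ∑ i ∈ Finset.range m,
            (ENNReal.ofReal ρ1 * ENNReal.ofReal δ) :=
          mul_le_mul_right (Finset.sum_le_sum fun i _ => hper i) _
      _ = ENNReal.ofReal (ρ1 * δ) := by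
          rw [Finset.sum_const, Finset.card_range, nsmul_eq_mul, ← mul_assoc]
          have hone : ENNReal.ofReal (1/m : ℝ) * (m : ℝ≥0∞) = 1 := by
            rw [← ENNReal.ofReal_natCast m, ← ENNReal.ofReal_mul (by positivity)]
            rw [one_div, inv_mul_cancel₀ hmR]
            simp
          rw [hone, one_mul, ← ENNReal.ofReal_mul hρ1nn]
  have hBbound : ∫⁻ ω, Bf ω ∂P ≤ ENNReal.ofReal ε := by
    set J : Ω → ℝ := fun ω => ∫ x, |empCDF m Rj ω x - cdfFun μj x| with hJdef
    have hJx_meas : ∀ ω, Measurable fun x => |empCDF m Rj ω x - cdfFun μj x| := by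
      intro ω
      refine Measurable.abs (Measurable.sub ?_ (cdfFun_meas μj))
      unfold empCDF
      exact measurable_const.mul (Finset.measurable_sum _ fun i _ =>
        Measurable.ite (measurableSet_le measurable_const measurable_id)
          measurable_const measurable_const)
    have hbd : ∀ ω x, |empCDF m Rj ω x - cdfFun μj x| ≤
        (1/m : ℝ) * ∑ i ∈ Finset.range m,
          |(if Rj i ω ≤ x then (1:ℝ) else 0) - cdfFun μj x| := by
      intro ω x
      have h1 : empCDF m Rj ω x - cdfFun μj x =
          (1/m : ℝ) * ∑ i ∈ Finset.range m,
            ((if Rj i ω ≤ x then (1:ℝ) else 0) - cdfFun μj x) := by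
        rw [Finset.sum_sub_distrib, Finset.sum_const, Finset.card_range, nsmul_eq_mul, mul_sub]
        have h2 : (1/m:ℝ) * ((m:ℝ) * cdfFun μj x) = cdfFun μj x := by
          field_simp
        rw [h2]
        rfl
      rw [h1, abs_mul, abs_of_nonneg (by positivity : (0:ℝ) ≤ 1/(m:ℝ))]
      exact mul_le_mul_of_nonneg_left (Finset.abs_sum_le_sum_abs _ _) (by positivity)
    have hintg : ∀ ω, Integrable (fun x => (1/m : ℝ) * ∑ i ∈ Finset.range m,
        |(if Rj i ω ≤ x then (1:ℝ) else 0) - cdfFun μj x|) volume := fun ω =>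
      (integrable_finset_sum _ fun i _ => indDiff_integrable μj hμjint (Rj i ω)).const_mul _
    have hJxint : ∀ ω, Integrable (fun x => |empCDF m Rj ω x - cdfFun μj x|) volume := by
      intro ω
      refine Integrable.mono' (hintg ω) (hJx_meas ω).aestronglyMeasurable ?_
      exact Filter.Eventually.of_forall fun x => by
        rw [Real.norm_eq_abs, abs_abs]; exact hbd ω x
    have hJnn : ∀ ω, 0 ≤ J ω := fun ω => integral_nonneg fun x => abs_nonneg _
    have hJle : ∀ ω, J ω ≤ (1/m:ℝ) * ∑ i ∈ Finset.range m, (2 * (|Rj i ω| + ∫ y, |y| ∂μj)) := by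
      intro ω
      calc J ω ≤ ∫ x, (1/m : ℝ) * ∑ i ∈ Finset.range m,
            |(if Rj i ω ≤ x then (1:ℝ) else 0) - cdfFun μj x| :=
            integral_mono (hJxint ω) (hintg ω) (hbd ω)
        _ = (1/m:ℝ) * ∑ i ∈ Finset.range m,
            ∫ x, |(if Rj i ω ≤ x then (1:ℝ) else 0) - cdfFun μj x| := by
            rw [integral_const_mul, integral_finset_sum _ fun i _ =>
              indDiff_integrable μj hμjint (Rj i ω)]
        _ ≤ (1/m:ℝ) * ∑ i ∈ Finset.range m, (2 * (|Rj i ω| + ∫ y, |y| ∂μj)) := by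
            refine mul_le_mul_of_nonneg_left
              (Finset.sum_le_sum fun i _ => indDiff_integral_le μj hμjint (Rj i ω))
              (by positivity)
    have hJ'sm : StronglyMeasurable (fun ω => ∫ x, |empCDF m Rj' ω x - cdfFun μj x|) := by
      refine StronglyMeasurable.integral_prod_right'
        (f := fun p : Ω × ℝ => |empCDF m Rj' p.1 p.2 - cdfFun μj p.2|) ?_
      exact (((empCDF_joint_meas m hRj'meas).sub
        ((cdfFun_meas μj).comp measurable_snd)).abs).stronglyMeasurable
    have hJae : J =ᵐ[P] fun ω => ∫ x, |empCDF m Rj' ω x - cdfFun μj x| := by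
      filter_upwards [hallae] with ω hω
      have hfe : (fun x => |empCDF m Rj ω x - cdfFun μj x|) =
          fun x => |empCDF m Rj' ω x - cdfFun μj x| := by
        funext x
        have : empCDF m Rj ω x = empCDF m Rj' ω x := by
          unfold empCDF
          congr 1
          exact Finset.sum_congr rfl fun i _ => by rw [(hω i).2]
        rw [this]
      show (∫ x, |empCDF m Rj ω x - cdfFun μj x|) = ∫ x, |empCDF m Rj' ω x - cdfFun μj x|
      rw [hfe]
    have hJint : Integrable J P := by
      refine Integrable.mono'
        (g := fun ω => (1/m:ℝ) * ∑ i ∈ Finset.range m, (2 * (|Rj i ω| + ∫ y, |y| ∂μj)))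
        ?_ (hJ'sm.aestronglyMeasurable.congr hJae.symm) ?_
      · refine Integrable.const_mul (integrable_finset_sum _ fun i _ => ?_) _
        exact ((hRjint i).abs.add (integrable_const _)).const_mul 2
      · exact Filter.Eventually.of_forall fun ω => by
          rw [Real.norm_eq_abs, abs_of_nonneg (hJnn ω)]; exact hJle ω
    have hBf_ae : ∀ᵐ ω ∂P, Bf ω = ENNReal.ofReal (J ω) := by
      filter_upwards [hallae] with ω hω
      have hfe : ∀ x, empCDF m Rj' ω x = empCDF m Rj ω x := by
        intro x
        unfold empCDF
        congr 1
        exact Finset.sum_congr rfl fun i _ => by rw [(hω i).2]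
      rw [hBdef]
      calc ∫⁻ x, ENNReal.ofReal |empCDF m Rj' ω x - cdfFun μj x|
          = ∫⁻ x, ENNReal.ofReal |empCDF m Rj ω x - cdfFun μj x| :=
            lintegral_congr fun x => by rw [hfe x]
        _ = ENNReal.ofReal (J ω) :=
            (ofReal_integral_eq_lintegral_ofReal (hJxint ω)
              (Filter.Eventually.of_forall fun x => abs_nonneg _)).symm
    calc ∫⁻ ω, Bf ω ∂P
        = ∫⁻ ω, ENNReal.ofReal (J ω) ∂P := lintegral_congr_ae hBf_ae
      _ = ENNReal.ofReal (∫ ω, J ω ∂P) :=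
          (ofReal_integral_eq_lintegral_ofReal hJint
            (Filter.Eventually.of_forall hJnn)).symm
      _ ≤ ENNReal.ofReal ε := ENNReal.ofReal_le_ofReal hε
  calc ∫⁻ ω, ENNReal.ofReal (I ω) ∂P
      ≤ ∫⁻ ω, (A ω + Bf ω) ∂P := lintegral_mono_ae hstep1
    _ = (∫⁻ ω, A ω ∂P) + ∫⁻ ω, Bf ω ∂P := lintegral_add_left hAmeas _
    _ ≤ ENNReal.ofReal (ρ1 * δ) + ENNReal.ofReal ε := add_le_add hAbound hBbound
    _ = ENNReal.ofReal (ρ1 * δ + ε) :=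
        (ENNReal.ofReal_add (mul_nonneg hρ1nn hδnn) hεnn).symm
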